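/- In the graph G constructed in the warm-up reduction from a DVD instance H with all indegrees at most 2, every interesting path p = v₁…v_k consists entirely of red vertices, has exactly k = L+1 vertices, and its non-final vertices v₁,…,v_{L} all lie in V_H and form a path of L vertices in H. -/

import Mathlib

/-- Colors of vertices in the circuit DAG. -/
inductive Color where
  | white | blue | red
deriving DecidableEq

/-- Number of red vertices on a path (given as a list of vertices). -/
def redCount {V : Type*} (color : V → Color) (p : List V) : ℕ :=
  (p.filter (fun v => decide (color v = Color.red))).length

/-- `p` is an interesting path: it starts and ends at red vertices and traverses exactly
`L+1` red vertices. -/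
def IntPath {V : Type*} (E : V → V → Prop) (color : V → Color) (L : ℕ) (p : List V) : Prop :=
  ∃ hp : p ≠ [], p.Chain' E ∧ color (p.head hp) = Color.red ∧
    color (p.getLast hp) = Color.red ∧ redCount color p = L + 1

variable {α : Type*} [Fintype α] [DecidableEq α]

/-- Vertex set of the warm-up reduction graph `G`: the original vertices `V_H` (`.inl v`),
their clones `V_H'` (`.inr (.inl v)`), and the white source `s₀` (`.inr (.inr ())`). -/
abbrev WV (α : Type*) := α ⊕ (α ⊕ Unit)

/-- Colors in the reduction graph: original vertices and clones are red, `s₀` is white. -/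
def wcolor : WV α → Color
  | .inl _ => Color.red
  | .inr (.inl _) => Color.red
  | .inr (.inr _) => Color.white

/-- Indegree of a vertex of `H`. -/
def windeg (EH : α → α → Prop) [DecidableRel EH] (v : α) : ℕ :=
  (Finset.univ.filter (fun u => EH u v)).card

/-- Edges of the warm-up reduction graph `G`: the edges of `H`, an edge from each `v` to its
clone `v'`, and an edge from `s₀` to each `v` of indegree at most 1 (so that `v` gets
`2 − indegree_H(v)` parallel copies in the multigraph; parallel multiplicities are
irrelevant for paths). -/
def WE (EH : α → α → Prop) [DecidableRel EH] : WV α → WV α → Prop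
  | .inl u, .inl v => EH u v
  | .inl u, .inr (.inl v) => u = v
  | .inr (.inr _), .inl v => windeg EH v ≤ 1
  | _, _ => False

lemma we_target_red (EH : α → α → Prop) [DecidableRel EH] {a b : WV α}
    (h : WE EH a b) : wcolor b = Color.red := by
  rcases b with v | v | v <;> rcases a with u | u | u <;> simp [wcolor] <;> exact h

lemma we_source_inl (EH : α → α → Prop) [DecidableRel EH] {a b : WV α}
    (h : WE EH a b) (hr : wcolor a = Color.red) : ∃ u, a = Sum.inl u := by
  rcases a with u | u | u
  · exact ⟨u, rfl⟩
  · rcases b with v | v | v <;> exact absurd h (by simp [WE])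
  · simp [wcolor] at hr

lemma allred (EH : α → α → Prop) [DecidableRel EH] :
    ∀ (p : List (WV α)) (a : WV α), (a :: p).Chain' (WE EH) → wcolor a = Color.red →
      ∀ z ∈ a :: p, wcolor z = Color.red := by
  intro p
  induction p with
  | nil => intro a _ ha z hz; simp at hz; subst hz; exact ha
  | cons b t ih =>
    intro a hch ha z hz
    rcases List.isChain_cons_cons.mp hch with ⟨hab, hch'⟩
    rcases List.mem_cons.mp hz with rfl | hz'
    · exact ha
    · exact ih b hch' (we_target_red EH hab) z hz'

lemma chainq (EH : α → α → Prop) [DecidableRel EH] :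
    ∀ (p : List (WV α)), p.Chain' (WE EH) → (∀ z ∈ p, wcolor z = Color.red) →
      ∃ q : List α, q.Chain' EH ∧ p.dropLast = q.map Sum.inl := by
  intro p
  induction p with
  | nil => exact fun _ _ => ⟨[], List.isChain_nil, rfl⟩
  | cons a rest ih =>
    intro hch hred
    match rest with
    | [] => exact ⟨[], List.isChain_nil, rfl⟩
    | b :: t =>
      rcases List.isChain_cons_cons.mp hch with ⟨hab, hch'⟩
      obtain ⟨u, rfl⟩ := we_source_inl EH hab (hred _ (List.mem_cons_self ..))
      obtain ⟨q', hq'c, hq'd⟩ := ih hch' (fun z hz => hred z (List.mem_cons_of_mem _ hz))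
      refine ⟨u :: q', ?_, ?_⟩
      · show List.IsChain EH (u :: q')
        rw [List.isChain_cons]
        refine ⟨?_, hq'c⟩
        intro y hy
        match t, q', hq'd with
        | [], [], _ => simp at hy
        | c :: t', w :: q'', hd =>
          simp only [List.dropLast_cons_of_ne_nil (List.cons_ne_nil c t'),
            List.map_cons, List.cons.injEq] at hd
          simp only [List.head?_cons, Option.mem_def, Option.some.injEq] at hy
          subst hy
          rw [hd.1] at hab
          exact hab
        | c :: t', [], hd =>
          simp [List.dropLast_cons_of_ne_nil (List.cons_ne_nil c t')] at hd
      · rw [List.dropLast_cons_of_ne_nil (List.cons_ne_nil b t), hq'd, List.map_cons]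

/-- in the warm-up reduction graph `G` built from a DAG `H` with all indegrees
at most 2, every interesting path `p` consists entirely of red vertices, has exactly `L+1`
vertices, and its non-final vertices all lie in `V_H` and form a path of `L` vertices in `H`. -/
theorem stmt12 (EH : α → α → Prop) [DecidableRel EH]
    (hdag : WellFounded EH) (L : ℕ) (hL : 2 ≤ L)
    (hdeg : ∀ v : α, windeg EH v ≤ 2)
    (p : List (WV α)) (hp : IntPath (WE EH) wcolor L p) :
    (∀ z ∈ p, wcolor z = Color.red) ∧ p.length = L + 1 ∧
    ∃ q : List α, q.Chain' EH ∧ q.length = L ∧ p.dropLast = q.map Sum.inl := by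
  obtain ⟨hne, hch, hhead, hlast, hcount⟩ := hp
  have hred : ∀ z ∈ p, wcolor z = Color.red := by
    match p, hne with
    | a :: rest, _ =>
      exact allred EH rest a hch (by simpa using hhead)
  have hfilter : p.filter (fun v => decide (wcolor v = Color.red)) = p :=
    List.filter_eq_self.mpr (fun z hz => by simp [hred z hz])
  have hlen : p.length = L + 1 := by
    have := hcount
    rw [redCount, hfilter] at this
    exact this
  refine ⟨hred, hlen, ?_⟩
  obtain ⟨q, hqc, hqd⟩ := chainq EH p hch hred
  refine ⟨q, hqc, ?_, hqd⟩
  have : p.dropLast.length = L := by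
    rw [List.length_dropLast, hlen]; rfl
  rw [hqd, List.length_map] at this
  exact this
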